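/- arXiv:2604.07724 — 3 statements merged into one kernel-verified Lean document; each statement's English description precedes it below -/
import Mathlib

section
/- Let p be an odd prime and let n be an integer. Then (A₁ mod p)^n is the identity matrix over ℤ/pℤ if and only if n ≡ 0 (mod 6). -/
/-- The coloring matrix `A_{σ₁σ₂}` of the 3-braid `σ₁σ₂`, reduced modulo `p`. -/
def A₁modp (p : ℕ) : Matrix (Fin 3) (Fin 3) (ZMod p) := !![0, 1, 0; 0, 0, 1; 1, -2, 2]

/-- For an odd prime `p` and `n : ℤ`, `(A₁ mod p) ^ n = 1` iff `6 ∣ n`. -/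
theorem A₁modp_zpow_eq_one_iff (p : ℕ) (hp : p.Prime) (hodd : Odd p) (n : ℤ) :
    (A₁modp p) ^ n = 1 ↔ (6 : ℤ) ∣ n := by
  haveI : Fact p.Prime := ⟨hp⟩
  have hdet : IsUnit (A₁modp p).det := by
    have : (A₁modp p).det = 1 := by
      simp [A₁modp, Matrix.det_fin_three]
    rw [this]; exact isUnit_one
  have h6 : (A₁modp p) ^ (6 : ℕ) = 1 := by
    ext i j
    fin_cases i <;> fin_cases j <;>
      simp [A₁modp, pow_succ, Matrix.mul_apply, Fin.sum_univ_three, Matrix.one_apply] <;> ring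
  have h6z : (A₁modp p) ^ (6 : ℤ) = 1 := by
    rw [show (6 : ℤ) = ((6 : ℕ) : ℤ) by norm_num, zpow_natCast]; exact h6
  constructor
  · intro h
    have hmod : (A₁modp p) ^ (n % 6) = 1 := by
      have hsplit : (A₁modp p) ^ (6 * (n / 6) + n % 6)
          = (A₁modp p) ^ (6 * (n / 6)) * (A₁modp p) ^ (n % 6) :=
        Matrix.zpow_add hdet _ _
      have h1 : (A₁modp p) ^ (6 * (n / 6)) = 1 := by
        rw [Matrix.zpow_mul _ hdet, h6z, Matrix.one_zpow]
      rw [Int.mul_ediv_add_emod, h, h1, one_mul] at hsplit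
      exact hsplit.symm
    have hge : 0 ≤ n % 6 := Int.emod_nonneg n (by norm_num)
    have hlt : n % 6 < 6 := Int.emod_lt_of_pos n (by norm_num)
    set r : ℕ := (n % 6).toNat with hr
    have hrn : (r : ℤ) = n % 6 := Int.toNat_of_nonneg hge
    have hrlt : r < 6 := by omega
    have hpow : (A₁modp p) ^ r = 1 := by
      rw [← zpow_natCast, hrn]; exact hmod
    have hr0 : r = 0 := by
      by_contra hne
      interval_cases r
      · exact hne rfl
      · have h00 := congrFun (congrFun hpow 0) 0
        simp [A₁modp, Matrix.one_apply] at h00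
      · have h00 := congrFun (congrFun hpow 0) 0
        simp [A₁modp, pow_succ, Matrix.mul_apply, Fin.sum_univ_three, Matrix.one_apply] at h00
      · have h01 := congrFun (congrFun hpow 0) 1
        simp [A₁modp, pow_succ, Matrix.mul_apply, Fin.sum_univ_three, Matrix.one_apply] at h01
        have h2 : ((2 : ℕ) : ZMod p) = 0 := by push_cast; linear_combination h01
        rw [ZMod.natCast_eq_zero_iff] at h2
        have := (Nat.prime_dvd_prime_iff_eq hp Nat.prime_two).mp h2
        rw [this] at hodd
        exact (Nat.not_odd_iff_even.mpr even_two) hodd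
      · have h00 := congrFun (congrFun hpow 0) 0
        simp [A₁modp, pow_succ, Matrix.mul_apply, Fin.sum_univ_three, Matrix.one_apply] at h00
        have h1 : (1 : ZMod p) = 0 := by linear_combination h00
        exact one_ne_zero h1
      · have h00 := congrFun (congrFun hpow 0) 0
        simp [A₁modp, pow_succ, Matrix.mul_apply, Fin.sum_univ_three, Matrix.one_apply] at h00
        have h1 : (1 : ZMod p) = 0 := by linear_combination h00
        exact one_ne_zero h1
    have : n % 6 = 0 := by omega
    exact Int.dvd_of_emod_eq_zero this
  · rintro ⟨m, rfl⟩
    rw [Matrix.zpow_mul _ hdet, h6z, Matrix.one_zpow]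
end

section
/- Let p be an odd prime and let n be an integer with n ≢ 0 (mod 6). Then the rank of the matrix (A₁ mod p)^n − I over the field ℤ/pℤ equals 1 if p = 3 and n ≡ 2 or 4 (mod 6), and equals 2 otherwise. -/
lemma rank_eq_of {p k : ℕ} [Fact p.Prime] (M : Matrix (Fin 3) (Fin 3) (ZMod p))
    (B : Matrix (Fin 3) (Fin k) (ZMod p)) (C : Matrix (Fin k) (Fin 3) (ZMod p))
    (hfac : M = B * C)
    (B' : Matrix (Fin k) (Fin 3) (ZMod p)) (C' : Matrix (Fin 3) (Fin k) (ZMod p))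
    (hdet : IsUnit (B' * M * C').det) : M.rank = k := by
  refine le_antisymm ?_ ?_
  · calc M.rank = (B*C).rank := by rw [hfac]
      _ ≤ B.rank := Matrix.rank_mul_le_left B C
      _ ≤ Fintype.card (Fin k) := Matrix.rank_le_card_width B
      _ = k := by simp
  · have hu : IsUnit (B' * M * C') := (Matrix.isUnit_iff_isUnit_det _).2 hdet
    calc (k:ℕ) = Fintype.card (Fin k) := by simp
      _ = (B'*M*C').rank := (Matrix.rank_of_isUnit _ hu).symm
      _ ≤ (M*C').rank := by rw [Matrix.mul_assoc]; exact Matrix.rank_mul_le_right _ _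
      _ ≤ M.rank := Matrix.rank_mul_le_left _ _

lemma topleft {p : ℕ} (M : Matrix (Fin 3) (Fin 3) (ZMod p)) :
    (!![1,0,0;0,1,0] : Matrix (Fin 2) (Fin 3) (ZMod p)) * M * (!![1,0;0,1;0,0] : Matrix (Fin 3) (Fin 2) (ZMod p)) = !![M 0 0, M 0 1; M 1 0, M 1 1] := by
  ext i j
  fin_cases i <;> fin_cases j <;>
    simp [Matrix.mul_apply, Fin.sum_univ_three, Fin.sum_univ_two, Matrix.vecMul, Matrix.vecHead, Matrix.vecTail, dotProduct]

lemma rank_two_aux {p : ℕ} [Fact p.Prime] (M : Matrix (Fin 3) (Fin 3) (ZMod p))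
    (B : Matrix (Fin 3) (Fin 2) (ZMod p))
    (hfac : M = B * (!![1,0,-1;0,1,-1] : Matrix (Fin 2) (Fin 3) (ZMod p)))
    (hd : B 0 0 * B 1 1 - B 0 1 * B 1 0 ≠ 0) : M.rank = 2 := by
  refine rank_eq_of M B _ hfac !![1,0,0;0,1,0] !![1,0;0,1;0,0] ?_
  rw [topleft, Matrix.det_fin_two_of]
  refine isUnit_iff_ne_zero.2 ?_
  have h00 : M 0 0 = B 0 0 := by rw [hfac]; simp [Matrix.mul_apply, Fin.sum_univ_three, Fin.sum_univ_two, Matrix.vecMul, Matrix.vecHead, Matrix.vecTail, dotProduct]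
  have h01 : M 0 1 = B 0 1 := by rw [hfac]; simp [Matrix.mul_apply, Fin.sum_univ_three, Fin.sum_univ_two, Matrix.vecMul, Matrix.vecHead, Matrix.vecTail, dotProduct]
  have h10 : M 1 0 = B 1 0 := by rw [hfac]; simp [Matrix.mul_apply, Fin.sum_univ_three, Fin.sum_univ_two, Matrix.vecMul, Matrix.vecHead, Matrix.vecTail, dotProduct]
  have h11 : M 1 1 = B 1 1 := by rw [hfac]; simp [Matrix.mul_apply, Fin.sum_univ_three, Fin.sum_univ_two, Matrix.vecMul, Matrix.vecHead, Matrix.vecTail, dotProduct]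
  rw [h00, h01, h10, h11]
  exact hd


lemma aux2a : (!![0,0,1;1,-2,2;2,-3,2] : Matrix (Fin 3) (Fin 3) (ZMod 3)) - 1 =
    (!![2;1;2] : Matrix (Fin 3) (Fin 1) (ZMod 3)) * (!![1,0,2] : Matrix (Fin 1) (Fin 3) (ZMod 3)) := by
  decide

lemma aux2b : (!![1,0,0] : Matrix (Fin 1) (Fin 3) (ZMod 3)) *
    ((!![2;1;2] : Matrix (Fin 3) (Fin 1) (ZMod 3)) * (!![1,0,2] : Matrix (Fin 1) (Fin 3) (ZMod 3))) *
    (!![1;0;0] : Matrix (Fin 3) (Fin 1) (ZMod 3)) = (!![2] : Matrix (Fin 1) (Fin 1) (ZMod 3)) := by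
  decide

lemma aux2c : (2 : ZMod 3) ≠ 0 := by decide

lemma aux4a : (!![2,-3,2;2,-2,1;1,0,0] : Matrix (Fin 3) (Fin 3) (ZMod 3)) - 1 =
    (!![1;2;1] : Matrix (Fin 3) (Fin 1) (ZMod 3)) * (!![1,0,2] : Matrix (Fin 1) (Fin 3) (ZMod 3)) := by
  decide

lemma aux4b : (!![1,0,0] : Matrix (Fin 1) (Fin 3) (ZMod 3)) *
    ((!![1;2;1] : Matrix (Fin 3) (Fin 1) (ZMod 3)) * (!![1,0,2] : Matrix (Fin 1) (Fin 3) (ZMod 3))) *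
    (!![1;0;0] : Matrix (Fin 3) (Fin 1) (ZMod 3)) = (!![1] : Matrix (Fin 1) (Fin 1) (ZMod 3)) := by
  decide

set_option maxHeartbeats 1600000 in
/-- For an odd prime `p` and an integer `n` with `n ≢ 0 (mod 6)`, the rank of
`(A₁ mod p) ^ n - I` over `ℤ/pℤ` is `1` if `p = 3` and `n ≡ 2` or `4 (mod 6)`,
and is `2` otherwise. -/
theorem rank_A₁modp_zpow_sub_one (p : ℕ) (hp : p.Prime) (hodd : Odd p) (n : ℤ)
    (hn : ¬ (6 : ℤ) ∣ n) :
    ((A₁modp p) ^ n - 1).rank =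
      if p = 3 ∧ (n % 6 = 2 ∨ n % 6 = 4) then 1 else 2 := by
  haveI : Fact p.Prime := ⟨hp⟩
  have hp2 : p ≠ 2 := by rintro rfl; exact Nat.not_odd_iff_even.2 even_two hodd
  have h2z : (2 : ZMod p) ≠ 0 := by
    intro h
    have := (ZMod.natCast_eq_zero_iff 2 p).1 (by exact_mod_cast h)
    rcases (Nat.prime_two.eq_one_or_self_of_dvd p this) with h | h
    · exact hp.one_lt.ne' h
    · exact hp2 h
  have hdetA : IsUnit (A₁modp p).det := by
    have : (A₁modp p).det = 1 := by
      simp [A₁modp, Matrix.det_fin_three]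
    rw [this]; exact isUnit_one
  have e2 : A₁modp p ^ 2 = !![0,0,1;1,-2,2;2,-3,2] := by
    rw [pow_two]
    ext i j
    fin_cases i <;> fin_cases j <;>
      simp [A₁modp, Matrix.mul_apply, Fin.sum_univ_three, Matrix.vecHead, Matrix.vecTail] <;> ring
  have e3 : A₁modp p ^ 3 = !![1,-2,2;2,-3,2;2,-2,1] := by
    rw [pow_succ, e2]
    ext i j
    fin_cases i <;> fin_cases j <;>
      simp [A₁modp, Matrix.mul_apply, Fin.sum_univ_three, Matrix.vecHead, Matrix.vecTail] <;> ring
  have e4 : A₁modp p ^ 4 = !![2,-3,2;2,-2,1;1,0,0] := by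
    rw [pow_succ, e3]
    ext i j
    fin_cases i <;> fin_cases j <;>
      simp [A₁modp, Matrix.mul_apply, Fin.sum_univ_three, Matrix.vecHead, Matrix.vecTail] <;> ring
  have e5 : A₁modp p ^ 5 = !![2,-2,1;1,0,0;0,1,0] := by
    rw [pow_succ, e4]
    ext i j
    fin_cases i <;> fin_cases j <;>
      simp [A₁modp, Matrix.mul_apply, Fin.sum_univ_three, Matrix.vecHead, Matrix.vecTail] <;> ring
  have e6 : A₁modp p ^ 6 = 1 := by
    rw [show (6:ℕ) = 5 + 1 from rfl, pow_succ, e5]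
    ext i j
    fin_cases i <;> fin_cases j <;>
      simp [A₁modp, Matrix.mul_apply, Matrix.one_apply, Fin.sum_univ_three, Matrix.vecHead, Matrix.vecTail] <;> ring
  have hzp : A₁modp p ^ n = A₁modp p ^ ((n % 6).toNat) := by
    conv_lhs => rw [show n = 6 * (n / 6) + n % 6 from (Int.mul_ediv_add_emod n 6).symm]
    rw [Matrix.zpow_add hdetA, Matrix.zpow_mul _ hdetA,
      show ((6:ℤ)) = ((6:ℕ):ℤ) by norm_num, zpow_natCast, e6, Matrix.one_zpow, one_mul,
      ← zpow_natCast, Int.toNat_of_nonneg (Int.emod_nonneg n (by norm_num))]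
  have hr : n % 6 = 1 ∨ n % 6 = 2 ∨ n % 6 = 3 ∨ n % 6 = 4 ∨ n % 6 = 5 := by
    have : n % 6 ≠ 0 := fun h => hn (Int.dvd_of_emod_eq_zero h)
    omega
  rcases hr with hr | hr | hr | hr | hr
  · -- n % 6 = 1 : rank 2
    rw [if_neg (by rintro ⟨-, h | h⟩ <;> omega)]
    rw [hr] at hzp
    have hA : A₁modp p ^ n = A₁modp p := hzp.trans (pow_one _)
    have hM : A₁modp p ^ n - 1 = !![-1,1,0;0,-1,1;1,-2,1] := by
      rw [hA]
      ext i j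
      fin_cases i <;> fin_cases j <;>
        simp [A₁modp, Matrix.sub_apply, Matrix.one_apply, Matrix.vecHead, Matrix.vecTail] <;> ring
    rw [hM]
    refine rank_two_aux _ !![-1,1;0,-1;1,-2] ?_ ?_
    · ext i j
      fin_cases i <;> fin_cases j <;>
        simp [Matrix.mul_apply, Fin.sum_univ_two, Matrix.vecHead, Matrix.vecTail] <;> ring
    · show (-1:ZMod p) * -1 - 1 * 0 ≠ 0
      intro h
      exact one_ne_zero (α := ZMod p) (by linear_combination h)
  · -- n % 6 = 2
    rw [hr] at hzp
    have hA := hzp.trans e2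
    by_cases hp3 : p = 3
    · subst hp3
      rw [if_pos ⟨rfl, Or.inl hr⟩]
      have hM : A₁modp 3 ^ n - 1 = (!![2;1;2] : Matrix (Fin 3) (Fin 1) (ZMod 3)) * (!![1,0,2] : Matrix (Fin 1) (Fin 3) (ZMod 3)) := by
        rw [hA]; exact aux2a
      rw [hM]
      refine rank_eq_of _ _ _ rfl !![1,0,0] !![1;0;0] ?_
      rw [aux2b, Matrix.det_fin_one_of]
      exact isUnit_iff_ne_zero.2 aux2c
    · rw [if_neg (by rintro ⟨h, -⟩; exact hp3 h)]
      have h3z : (3 : ZMod p) ≠ 0 := by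
        intro h
        have := (ZMod.natCast_eq_zero_iff 3 p).1 (by exact_mod_cast h)
        rcases (Nat.prime_three.eq_one_or_self_of_dvd p this) with h | h
        · exact hp.one_lt.ne' h
        · exact hp3 h
      have hM : A₁modp p ^ n - 1 = !![-1,0,1;1,-3,2;2,-3,1] := by
        rw [hA]
        ext i j
        fin_cases i <;> fin_cases j <;>
          simp [Matrix.sub_apply, Matrix.one_apply, Matrix.vecHead, Matrix.vecTail] <;> ring
      rw [hM]
      refine rank_two_aux _ !![-1,0;1,-3;2,-3] ?_ ?_
      · ext i j
        fin_cases i <;> fin_cases j <;>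
          simp [Matrix.mul_apply, Fin.sum_univ_two, Matrix.vecHead, Matrix.vecTail] <;> ring
      · show (-1:ZMod p) * -3 - 0 * 1 ≠ 0
        intro h
        exact h3z (by linear_combination h)
  · -- n % 6 = 3 : rank 2
    rw [if_neg (by rintro ⟨-, h | h⟩ <;> omega)]
    rw [hr] at hzp
    have hA := hzp.trans e3
    have hM : A₁modp p ^ n - 1 = !![0,-2,2;2,-4,2;2,-2,0] := by
      rw [hA]
      ext i j
      fin_cases i <;> fin_cases j <;>
        simp [Matrix.sub_apply, Matrix.one_apply, Matrix.vecHead, Matrix.vecTail] <;> ring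
    rw [hM]
    refine rank_two_aux _ !![0,-2;2,-4;2,-2] ?_ ?_
    · ext i j
      fin_cases i <;> fin_cases j <;>
        simp [Matrix.mul_apply, Fin.sum_univ_two, Matrix.vecHead, Matrix.vecTail] <;> ring
    · show (0:ZMod p) * -4 - (-2) * 2 ≠ 0
      intro h
      exact mul_ne_zero h2z h2z (by linear_combination h)
  · -- n % 6 = 4
    rw [hr] at hzp
    have hA := hzp.trans e4
    by_cases hp3 : p = 3
    · subst hp3
      rw [if_pos ⟨rfl, Or.inr hr⟩]
      have hM : A₁modp 3 ^ n - 1 = (!![1;2;1] : Matrix (Fin 3) (Fin 1) (ZMod 3)) * (!![1,0,2] : Matrix (Fin 1) (Fin 3) (ZMod 3)) := by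
        rw [hA]; exact aux4a
      rw [hM]
      refine rank_eq_of _ _ _ rfl !![1,0,0] !![1;0;0] ?_
      rw [aux4b, Matrix.det_fin_one_of]
      exact isUnit_one
    · rw [if_neg (by rintro ⟨h, -⟩; exact hp3 h)]
      have h3z : (3 : ZMod p) ≠ 0 := by
        intro h
        have := (ZMod.natCast_eq_zero_iff 3 p).1 (by exact_mod_cast h)
        rcases (Nat.prime_three.eq_one_or_self_of_dvd p this) with h | h
        · exact hp.one_lt.ne' h
        · exact hp3 h
      have hM : A₁modp p ^ n - 1 = !![1,-3,2;2,-3,1;1,0,-1] := by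
        rw [hA]
        ext i j
        fin_cases i <;> fin_cases j <;>
          simp [Matrix.sub_apply, Matrix.one_apply, Matrix.vecHead, Matrix.vecTail] <;> ring
      rw [hM]
      refine rank_two_aux _ !![1,-3;2,-3;1,0] ?_ ?_
      · ext i j
        fin_cases i <;> fin_cases j <;>
          simp [Matrix.mul_apply, Fin.sum_univ_two, Matrix.vecHead, Matrix.vecTail] <;> ring
      · show (1:ZMod p) * -3 - (-3) * 2 ≠ 0
        intro h
        exact h3z (by linear_combination h)
  · -- n % 6 = 5 : rank 2
    rw [if_neg (by rintro ⟨-, h | h⟩ <;> omega)]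
    rw [hr] at hzp
    have hA := hzp.trans e5
    have hM : A₁modp p ^ n - 1 = !![1,-2,1;1,-1,0;0,1,-1] := by
      rw [hA]
      ext i j
      fin_cases i <;> fin_cases j <;>
        simp [Matrix.sub_apply, Matrix.one_apply, Matrix.vecHead, Matrix.vecTail] <;> ring
    rw [hM]
    refine rank_two_aux _ !![1,-2;1,-1;0,1] ?_ ?_
    · ext i j
      fin_cases i <;> fin_cases j <;>
        simp [Matrix.mul_apply, Fin.sum_univ_two, Matrix.vecHead, Matrix.vecTail] <;> ring
    · show (1:ZMod p) * -1 - (-2) * 1 ≠ 0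
      intro h
      exact one_ne_zero (α := ZMod p) (by linear_combination h)
end

section
/- Let G be the free product (coproduct) of a cyclic group of order 2 and a cyclic group of order 3 (i.e., G ≅ ℤ/2ℤ ∗ ℤ/3ℤ). If a, b ∈ G satisfy ab = ba, then there exist c ∈ G and integers k, l such that a = c^k and b = c^l. -/
/-- The free product `ℤ/2ℤ ∗ ℤ/3ℤ` of a cyclic group of order 2 and a cyclic group
of order 3. -/
abbrev FreeProdC2C3 : Type :=
  Monoid.Coprod (Multiplicative (ZMod 2)) (Multiplicative (ZMod 3))

set_option linter.unnecessarySimpa false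

namespace C2C3Aux

abbrev G : Type := Monoid.Coprod (Multiplicative (ZMod 2)) (Multiplicative (ZMod 3))

inductive L | X | Y | Z deriving DecidableEq
open L

def f : L → Bool | X => false | Y => true | Z => true
def linv : L → L | X => X | Y => Z | Z => Y
def lmerge : L → L → L | Y, Y => Z | Z, Z => Y | _, _ => X

def push (p : L) : List L → List L
  | [] => [p]
  | q :: t => if f p = f q then (if q = linv p then t else lmerge p q :: t) else p :: q :: t

def pushList (u w : List L) : List L := u.foldr push w

def Red (w : List L) : Prop := w.Chain' (fun p q => f p ≠ f q)

@[simp] lemma f_linv (p : L) : f (linv p) = f p := by cases p <;> rfl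

lemma f_lmerge {p q : L} (h : f p = f q) (h2 : q ≠ linv p) : f (lmerge p q) = f p := by
  cases p <;> cases q <;> simp_all [f, linv, lmerge]

@[simp] lemma pushList_nil (w : List L) : pushList [] w = w := rfl
@[simp] lemma pushList_cons (p : L) (u w : List L) :
    pushList (p :: u) w = push p (pushList u w) := rfl
lemma pushList_append (u v w : List L) :
    pushList (u ++ v) w = pushList u (pushList v w) := List.foldr_append ..

lemma push_clean {p : L} {w : List L} (h : ∀ q ∈ w.head?, f p ≠ f q) :
    push p w = p :: w := by
  cases w with
  | nil => rfl
  | cons q t => simp only [List.head?_cons, Option.mem_some_iff, forall_eq] at h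
                simp [push, h]

lemma red_push {p : L} {w : List L} (h : Red w) : Red (push p w) := by
  cases w with
  | nil => simp [push, Red, List.Chain']
  | cons q t =>
    by_cases hf : f p = f q
    · by_cases hq : q = linv p
      · rw [push, if_pos hf, if_pos hq]
        exact h.tail
      · have hm : f (lmerge p q) = f p := f_lmerge hf hq
        rw [push, if_pos hf, if_neg hq]
        rw [Red, List.Chain', List.isChain_cons] at h ⊢
        refine ⟨fun y hy => ?_, h.2⟩
        have := h.1 y hy
        rwa [hm, hf]
    · rw [push, if_neg hf]
      rw [Red, List.Chain', List.isChain_cons_cons]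
      exact ⟨hf, h⟩

lemma red_pushList {u w : List L} (h : Red w) : Red (pushList u w) := by
  induction u with
  | nil => exact h
  | cons p u ih => exact red_push ih

lemma length_push_le (p : L) (w : List L) : (push p w).length ≤ w.length + 1 := by
  cases w with
  | nil => simp [push]
  | cons q t =>
    by_cases hf : f p = f q
    · by_cases hq : q = linv p
      · rw [push, if_pos hf, if_pos hq]; simp; omega
      · rw [push, if_pos hf, if_neg hq]; simp
    · rw [push, if_neg hf]; simp

lemma length_push_clash {p q : L} {t : List L} (hf : f p = f q) :
    (push p (q :: t)).length ≤ (q :: t).length := by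
  by_cases hq : q = linv p
  · rw [push, if_pos hf, if_pos hq]; simp
  · rw [push, if_pos hf, if_neg hq]; simp

lemma length_pushList_le (u w : List L) :
    (pushList u w).length ≤ u.length + w.length := by
  induction u with
  | nil => simp
  | cons p u ih =>
    calc (push p (pushList u w)).length ≤ (pushList u w).length + 1 := length_push_le ..
    _ ≤ _ := by simp only [List.length_cons]; omega

/-! ### the group side -/

def emb : L → G
  | X => Monoid.Coprod.inl (Multiplicative.ofAdd (1 : ZMod 2))
  | Y => Monoid.Coprod.inr (Multiplicative.ofAdd (1 : ZMod 3))
  | Z => Monoid.Coprod.inr (Multiplicative.ofAdd (2 : ZMod 3))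

lemma emb_linv (p : L) : emb p * emb (linv p) = 1 := by
  cases p <;> simp only [emb, linv, ← MonoidHom.map_mul, ← ofAdd_add]
  · have : (1 + 1 : ZMod 2) = 0 := by decide
    rw [this]; simp
  · have : (1 + 2 : ZMod 3) = 0 := by decide
    rw [this]; simp
  · have : (2 + 1 : ZMod 3) = 0 := by decide
    rw [this]; simp

lemma emb_linv' (p : L) : emb (linv p) = (emb p)⁻¹ :=
  eq_inv_of_mul_eq_one_right (by simpa [mul_comm] using emb_linv p)

lemma embYY : emb Y * emb Y = emb Z := by
  simp only [emb, ← MonoidHom.map_mul, ← ofAdd_add]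
  have : (1 + 1 : ZMod 3) = 2 := by decide
  rw [this]

lemma embZZ : emb Z * emb Z = emb Y := by
  simp only [emb, ← MonoidHom.map_mul, ← ofAdd_add]
  have : (2 + 2 : ZMod 3) = 1 := by decide
  rw [this]

lemma emb_lmerge {p q : L} (h : f p = f q) (h2 : q ≠ linv p) :
    emb p * emb q = emb (lmerge p q) := by
  cases p <;> cases q <;> simp_all [f, linv, lmerge, embYY, embZZ]

def tg (w : List L) : G := (w.map emb).prod

@[simp] lemma tg_nil : tg [] = 1 := rfl
@[simp] lemma tg_cons (p : L) (w : List L) : tg (p :: w) = emb p * tg w := by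
  simp [tg]
lemma tg_append (u v : List L) : tg (u ++ v) = tg u * tg v := by
  simp [tg]
@[simp] lemma tg_single (p : L) : tg [p] = emb p := by simp

lemma tg_push (p : L) (w : List L) : tg (push p w) = emb p * tg w := by
  cases w with
  | nil => simp [push]
  | cons q t =>
    by_cases hf : f p = f q
    · by_cases hq : q = linv p
      · rw [push, if_pos hf, if_pos hq, hq]
        simp [← mul_assoc, emb_linv]
      · rw [push, if_pos hf, if_neg hq]
        simp [← mul_assoc, emb_lmerge hf hq]
    · rw [push, if_neg hf]; simp

lemma tg_pushList (u w : List L) : tg (pushList u w) = tg u * tg w := by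
  induction u with
  | nil => simp
  | cons p u ih => simp [tg_push, ih, mul_assoc]

def winv (w : List L) : List L := (w.map linv).reverse

@[simp] lemma winv_nil : winv [] = [] := rfl
lemma winv_cons (p : L) (w : List L) : winv (p :: w) = winv w ++ [linv p] := by
  simp [winv]
@[simp] lemma length_winv (w : List L) : (winv w).length = w.length := by simp [winv]

lemma tg_winv (w : List L) : tg (winv w) = (tg w)⁻¹ := by
  induction w with
  | nil => simp
  | cons p t ih => simp [winv_cons, tg_append, ih, emb_linv', mul_inv_rev]

lemma red_winv {w : List L} (h : Red w) : Red (winv w) := by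
  rw [Red, winv, List.Chain', List.isChain_reverse, List.isChain_map]
  exact List.IsChain.imp (fun a b hab => by simp [flip]; exact fun e => hab e.symm) h

/-! ### the action on reduced words -/

def W : Type := {w : List L // Red w}

def pushW (p : L) (w : W) : W := ⟨push p w.1, red_push w.2⟩

lemma push_clean_of_red {p b : L} {t : List L} (hpb : f p = f b) (hw : Red (b :: t)) :
    push p t = p :: t := by
  apply push_clean
  intro q hq
  cases t with
  | nil => simp at hq
  | cons r t =>
    simp only [List.head?_cons, Option.mem_some_iff] at hq
    subst hq
    rw [hpb]
    exact (List.isChain_cons_cons.1 hw).1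

lemma pushXX (w : W) : pushW X (pushW X w) = w := by
  obtain ⟨w, hw⟩ := w
  apply Subtype.ext
  show push X (push X w) = w
  cases w with
  | nil => rfl
  | cons q t =>
    cases q with
    | X =>
      have h1 : push X (X :: t) = t := by simp [push, f, linv]
      rw [h1, push_clean_of_red rfl hw]
    | Y => simp [push, f, linv, lmerge]
    | Z => simp [push, f, linv, lmerge]

lemma pushYYY (w : W) : pushW Y (pushW Y (pushW Y w)) = w := by
  obtain ⟨w, hw⟩ := w
  apply Subtype.ext
  show push Y (push Y (push Y w)) = w
  have e1 : ∀ t : List L, push Y (Y :: t) = Z :: t := by intro t; simp [push, f, linv, lmerge]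
  have e2 : ∀ t : List L, push Y (Z :: t) = t := by intro t; simp [push, f, linv, lmerge]
  cases w with
  | nil => rw [show push Y ([] : List L) = [Y] from rfl, e1, e2]
  | cons q t =>
    cases q with
    | X => simp [push, f, linv, lmerge]
    | Y => rw [e1, e2, push_clean_of_red rfl hw]
    | Z => rw [e2, push_clean_of_red (show f Y = f Z from rfl) hw, e1]

lemma pushYY_Z (w : W) : pushW Y (pushW Y w) = pushW Z w := by
  obtain ⟨w, hw⟩ := w
  apply Subtype.ext
  show push Y (push Y w) = push Z w
  have e1 : ∀ t : List L, push Y (Y :: t) = Z :: t := by intro t; simp [push, f, linv, lmerge]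
  have e2 : ∀ t : List L, push Y (Z :: t) = t := by intro t; simp [push, f, linv, lmerge]
  cases w with
  | nil => rw [show push Y ([] : List L) = [Y] from rfl, e1]; rfl
  | cons q t =>
    cases q with
    | X => simp [push, f, linv, lmerge]
    | Y =>
      rw [e1, e2]
      simp [push, f, linv, lmerge]
    | Z =>
      rw [e2, push_clean_of_red (show f Y = f Z from rfl) hw]
      simp [push, f, linv, lmerge]

/-! ### homs and the normal form -/

def homOfPow {M : Type*} [Monoid M] (n : ℕ) [NeZero n] (s : M) (h : s ^ n = 1) :
    Multiplicative (ZMod n) →* M where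
  toFun m := s ^ (m.toAdd.val)
  map_one' := by
    show s ^ (ZMod.val (0 : ZMod n)) = 1
    simp
  map_mul' a b := by
    show s ^ (ZMod.val (a.toAdd + b.toAdd)) = s ^ a.toAdd.val * s ^ b.toAdd.val
    rw [← pow_add, ZMod.val_add, ← pow_eq_pow_mod _ h]

def sX : Function.End W := pushW X
def sY : Function.End W := pushW Y

lemma sX_sq : sX ^ 2 = 1 := by
  funext w
  exact pushXX w

lemma sY_cube : sY ^ 3 = 1 := by
  funext w
  exact pushYYY w

def f2 : Multiplicative (ZMod 2) →* Function.End W := homOfPow 2 sX sX_sq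
def f3 : Multiplicative (ZMod 3) →* Function.End W := homOfPow 3 sY sY_cube

def Phi : G →* Function.End W := Monoid.Coprod.lift f2 f3

def eW : W := ⟨[], List.isChain_nil⟩

def NF (g : G) : List L := (Phi g eW).1

lemma red_NF (g : G) : Red (NF g) := (Phi g eW).2

lemma Phi_emb (p : L) (w : W) : Phi (emb p) w = pushW p w := by
  cases p
  · show (f2 (Multiplicative.ofAdd (1 : ZMod 2))) w = pushW L.X w
    show (sX ^ (ZMod.val (1 : ZMod 2))) w = pushW L.X w
    rw [show ZMod.val (1 : ZMod 2) = 1 from rfl, pow_one]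
    rfl
  · show (f3 (Multiplicative.ofAdd (1 : ZMod 3))) w = pushW L.Y w
    show (sY ^ (ZMod.val (1 : ZMod 3))) w = pushW L.Y w
    rw [show ZMod.val (1 : ZMod 3) = 1 from rfl, pow_one]
    rfl
  · show (f3 (Multiplicative.ofAdd (2 : ZMod 3))) w = pushW L.Z w
    show (sY ^ (ZMod.val (2 : ZMod 3))) w = pushW L.Z w
    have : ZMod.val (2 : ZMod 3) = 2 := rfl
    rw [this, pow_two]
    exact pushYY_Z w

lemma inl_eq_pow (m : Multiplicative (ZMod 2)) :
    Monoid.Coprod.inl m = (emb L.X) ^ (m.toAdd.val) := by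
  rw [emb, ← MonoidHom.map_pow]
  congr 1
  rw [← ofAdd_nsmul]
  simp [ZMod.natCast_val, ZMod.cast_id]

lemma inr_eq_pow (m : Multiplicative (ZMod 3)) :
    Monoid.Coprod.inr m = (emb L.Y) ^ (m.toAdd.val) := by
  rw [emb, ← MonoidHom.map_pow]
  congr 1
  rw [← ofAdd_nsmul]
  simp [ZMod.natCast_val, ZMod.cast_id]

lemma tg_Phi (g : G) : ∀ w : W, tg (Phi g w).1 = g * tg w.1 := by
  induction g using Monoid.Coprod.induction_on with
  | inl m =>
    intro w
    rw [inl_eq_pow]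
    generalize (Multiplicative.toAdd m).val = k
    induction k generalizing w with
    | zero => rw [pow_zero, map_one, one_mul]; rfl
    | succ k ih =>
      rw [pow_succ, map_mul]
      show tg ((Phi ((emb L.X) ^ k)) (Phi (emb L.X) w)).1 = _
      rw [ih, Phi_emb]
      show (emb L.X) ^ k * tg (push L.X w.1) = _
      rw [tg_push, mul_assoc]
  | inr m =>
    intro w
    rw [inr_eq_pow]
    generalize (Multiplicative.toAdd m).val = k
    induction k generalizing w with
    | zero => rw [pow_zero, map_one, one_mul]; rfl
    | succ k ih =>
      rw [pow_succ, map_mul]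
      show tg ((Phi ((emb L.Y) ^ k)) (Phi (emb L.Y) w)).1 = _
      rw [ih, Phi_emb]
      show (emb L.Y) ^ k * tg (push L.Y w.1) = _
      rw [tg_push, mul_assoc]
  | mul x y hx hy =>
    intro w
    rw [map_mul]
    show tg ((Phi x) ((Phi y) w)).1 = _
    rw [hx, hy, mul_assoc]

lemma tg_NF (g : G) : tg (NF g) = g := by
  have := tg_Phi g eW
  simpa [eW, NF] using this

lemma NF_tg {w : List L} (h : Red w) : NF (tg w) = w := by
  induction w with
  | nil => show (Phi (tg []) eW).1 = []
           rw [tg_nil, map_one]; rfl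
  | cons p t ih =>
    show (Phi (tg (p :: t)) eW).1 = p :: t
    rw [tg_cons, map_mul]
    have h1 : (Phi (emb p)) ((Phi (tg t)) eW) = pushW p ⟨NF (tg t), red_NF _⟩ := Phi_emb ..
    show ((Phi (emb p)) ((Phi (tg t)) eW)).1 = p :: t
    rw [h1]
    show push p (NF (tg t)) = p :: t
    rw [ih h.tail]
    apply push_clean
    intro q hq
    cases t with
    | nil => simp at hq
    | cons r t =>
      simp only [List.head?_cons, Option.mem_some_iff] at hq
      subst hq
      exact (List.isChain_cons_cons.1 h).1

lemma tg_inj {u v : List L} (hu : Red u) (hv : Red v) (h : tg u = tg v) : u = v := by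
  rw [← NF_tg hu, ← NF_tg hv, h]

lemma NF_mul (a b : G) : NF (a * b) = pushList (NF a) (NF b) := by
  have h1 : tg (pushList (NF a) (NF b)) = a * b := by
    rw [tg_pushList, tg_NF, tg_NF]
  rw [← h1, NF_tg (red_pushList (red_NF b))]

lemma NF_one : NF 1 = [] := by
  have : tg ([] : List L) = 1 := tg_nil
  rw [← this, NF_tg List.isChain_nil]

lemma eq_one_of_NF_nil {g : G} (h : NF g = []) : g = 1 := by
  have := tg_NF g
  rw [h, tg_nil] at this
  exact this.symm

lemma NF_emb (p : L) : NF (emb p) = [p] := by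
  have : tg [p] = emb p := tg_single p
  rw [← this, NF_tg]
  simp [Red, List.Chain']

/-! ### combinatorial lemmas -/

lemma linv_linv (q : L) : linv (linv q) = q := by cases q <;> rfl

lemma red_append {u v : List L} (hu : Red u) (hv : Red v)
    (h : ∀ x ∈ u.getLast?, ∀ y ∈ v.head?, f x ≠ f y) : Red (u ++ v) :=
  List.isChain_append.2 ⟨hu, hv, h⟩

lemma pushList_of_red_append {u w : List L} (h : Red (u ++ w)) : pushList u w = u ++ w := by
  induction u with
  | nil => rfl
  | cons p u ih =>
    have h' : Red (u ++ w) := h.tail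
    rw [pushList_cons, ih h']
    exact push_clean (List.isChain_cons.1 h).1

lemma length_pushList_clash {u : List L} {q : L} {t : List L} (hu : u ≠ [])
    (hf : f (u.getLast hu) = f q) :
    (pushList u (q :: t)).length + 1 ≤ u.length + (q :: t).length := by
  obtain ⟨u', p, hup⟩ := (List.eq_nil_or_concat u).resolve_left hu
  rw [List.concat_eq_append] at hup
  subst hup
  rw [pushList_append]
  have hl : f p = f q := by
    rwa [List.getLast_append] at hf
  have h1 : (pushList u' (pushList [p] (q :: t))).length ≤
      u'.length + (pushList [p] (q :: t)).length := length_pushList_le ..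
  have h2 : (pushList [p] (q :: t)).length ≤ (q :: t).length := by
    show (push p (q :: t)).length ≤ _
    exact length_push_clash hl
  have h3 : (u' ++ [p]).length = u'.length + 1 := by simp
  omega

lemma L1 (p : L) (u : List L) : ∀ (w : List L), Red (p :: u) → Red w →
    (∃ x s, pushList (p :: u) w = x :: s ∧ f x = f p) ∨
      (w = winv (p :: u) ++ pushList (p :: u) w) := by
  induction u generalizing p with
  | nil =>
    intro w _ _
    show (∃ x s, push p w = x :: s ∧ f x = f p) ∨ (w = winv [p] ++ push p w)
    cases w with
    | nil => exact Or.inl ⟨p, [], rfl, rfl⟩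
    | cons q t =>
      by_cases hf : f p = f q
      · by_cases hq : q = linv p
        · right
          rw [push, if_pos hf, if_pos hq, hq]
          rfl
        · left
          rw [push, if_pos hf, if_neg hq]
          exact ⟨_, _, rfl, f_lmerge hf hq⟩
      · left
        rw [push, if_neg hf]
        exact ⟨p, q :: t, rfl, rfl⟩
  | cons p' u ih =>
    intro w hru hrw
    have hred' : Red (p' :: u) := hru.tail
    have hfp : f p ≠ f p' := (List.isChain_cons_cons.1 hru).1
    rcases ih p' w hred' hrw with ⟨x, s, hxs, hfx⟩ | habs
    · left
      refine ⟨p, x :: s, ?_, rfl⟩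
      rw [pushList_cons, hxs]
      apply push_clean
      intro y hy
      simp only [List.head?_cons, Option.mem_some_iff] at hy
      subst hy
      rw [hfx]
      exact hfp
    · rw [pushList_cons]
      rcases hW : pushList (p' :: u) w with _ | ⟨x, s⟩
      · left
        exact ⟨p, [], rfl, rfl⟩
      · by_cases hf : f p = f x
        · by_cases hq : x = linv p
          · right
            rw [push, if_pos hf, if_pos hq]
            rw [habs, hW, hq]
            simp [winv_cons, List.append_assoc]
          · left
            rw [push, if_pos hf, if_neg hq]
            exact ⟨_, _, rfl, f_lmerge hf hq⟩
        · left
          rw [push, if_neg hf]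
          exact ⟨p, x :: s, rfl, rfl⟩

/-! ### commuting lists are powers of a common word -/

def nrep (r : List L) : ℕ → List L
  | 0 => []
  | n + 1 => r ++ nrep r n

lemma nrep_add (r : List L) (p q : ℕ) : nrep r (p + q) = nrep r p ++ nrep r q := by
  induction p with
  | zero => simp [nrep]
  | succ p ih => rw [Nat.succ_add, nrep, ih, nrep, List.append_assoc]

lemma tg_nrep (r : List L) (n : ℕ) : tg (nrep r n) = tg r ^ n := by
  induction n with
  | zero => simp [nrep]
  | succ n ih => rw [nrep, tg_append, ih, pow_succ']

lemma comm_lists : ∀ (n : ℕ) (s t : List L), s.length + t.length ≤ n → s ++ t = t ++ s →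
    ∃ r p q, s = nrep r p ∧ t = nrep r q := by
  intro n
  induction n using Nat.strong_induction_on with
  | _ n ih =>
  intro s t hlen hcomm
  rcases eq_or_ne s [] with rfl | hs
  · exact ⟨t, 0, 1, rfl, by simp [nrep]⟩
  rcases eq_or_ne t [] with rfl | ht
  · exact ⟨s, 1, 0, by simp [nrep], rfl⟩
  have hslen : 1 ≤ s.length := by
    rcases s with _ | ⟨a, s⟩
    · exact absurd rfl hs
    · simp
  have htlen : 1 ≤ t.length := by
    rcases t with _ | ⟨a, t⟩
    · exact absurd rfl ht
    · simp
  rcases le_total s.length t.length with hle | hle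
  · have h2 := congrArg (List.take s.length) hcomm
    rw [List.take_append, List.take_append] at h2
    simp only [List.take_length, Nat.sub_self, List.take_zero, List.append_nil,
      Nat.sub_eq_zero_of_le hle] at h2
    have h1 : t.take s.length = s := h2.symm
    set d := t.drop s.length with hd
    have ht2 : t = s ++ d := by rw [← h1, hd, List.take_append_drop]
    have hc2 : s ++ d = d ++ s := by
      rw [ht2] at hcomm
      have h3 : s ++ (s ++ d) = s ++ (d ++ s) := by rw [hcomm, List.append_assoc]
      exact List.append_cancel_left h3
    have hdl : d.length = t.length - s.length := by simp [hd]
    obtain ⟨r, p, q, hsr, hdr⟩ := ih (s.length + d.length) (by omega) s d le_rfl hc2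
    exact ⟨r, p, p + q, hsr, by rw [ht2, hsr, hdr, ← nrep_add]⟩
  · have h2 := congrArg (List.take t.length) hcomm.symm
    rw [List.take_append, List.take_append] at h2
    simp only [List.take_length, Nat.sub_self, List.take_zero, List.append_nil,
      Nat.sub_eq_zero_of_le hle] at h2
    have h1 : s.take t.length = t := h2.symm
    set d := s.drop t.length with hd
    have ht2 : s = t ++ d := by rw [← h1, hd, List.take_append_drop]
    have hc2 : t ++ d = d ++ t := by
      rw [ht2] at hcomm
      have h3 : t ++ (t ++ d) = t ++ (d ++ t) := by rw [← hcomm, List.append_assoc]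
      exact List.append_cancel_left h3
    have hdl : d.length = s.length - t.length := by simp [hd]
    obtain ⟨r, p, q, hsr, hdr⟩ := ih (t.length + d.length) (by omega) t d le_rfl hc2
    exact ⟨r, p + q, p, by rw [ht2, hsr, hdr, ← nrep_add], hsr⟩

/-! ### conjugation length bounds -/

lemma conj_zpow (g c : G) (k : ℤ) : (g * c * g⁻¹) ^ k = g * c ^ k * g⁻¹ := by
  have := map_zpow (MulAut.conj g) c k
  simpa [MulAut.conj_apply] using this

lemma conj_len {g : G} {q : L} {r : L} {t : List L} (hNF : NF g = r :: t)
    (hhead : f r = f q) (hlast : f ((r :: t).getLast (List.cons_ne_nil r t)) = f q) :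
    (NF ((emb q)⁻¹ * g * emb q)).length ≤ (r :: t).length ∧
    (r = q → t ≠ [] → (NF ((emb q)⁻¹ * g * emb q)).length + 1 ≤ (r :: t).length) := by
  have hinv : (emb q)⁻¹ = emb (linv q) := (emb_linv' q).symm
  have h1 : NF ((emb q)⁻¹ * g) = push (linv q) (r :: t) := by
    rw [hinv, NF_mul, NF_emb, hNF]
    rfl
  have h2 : NF ((emb q)⁻¹ * g * emb q) = pushList (push (linv q) (r :: t)) [q] := by
    rw [NF_mul, h1, NF_emb]
  have hfl : f (linv q) = f r := by rw [f_linv, hhead]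
  by_cases hr : r = q
  · have hp : push (linv q) (r :: t) = t := by
      rw [push, if_pos hfl, if_pos (by rw [hr, linv_linv])]
    rw [h2, hp]
    cases t with
    | nil => exact ⟨by simp [pushList], fun _ h => absurd rfl h⟩
    | cons a t' =>
      have hlast' : f ((a :: t').getLast (List.cons_ne_nil a t')) = f q := by
        rwa [List.getLast_cons (List.cons_ne_nil a t')] at hlast
      have := length_pushList_clash (t := ([] : List L)) (List.cons_ne_nil a t') hlast'
      constructor
      · simp at this ⊢; omega
      · intro _ _; simp at this ⊢; omega
  · have hp : push (linv q) (r :: t) = lmerge (linv q) r :: t := by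
      rw [push, if_pos hfl, if_neg (by rw [linv_linv]; exact hr)]
    have hm0 : f (lmerge (linv q) r) = f q := by
      rw [f_lmerge hfl (by rw [linv_linv]; exact hr), f_linv]
    rw [h2, hp]
    refine ⟨?_, fun hrq _ => absurd hrq hr⟩
    cases t with
    | nil =>
      have : (push (lmerge (linv q) r) [q]).length ≤ 1 := length_push_clash hm0
      simpa [pushList] using this
    | cons a t' =>
      have hlast' : f ((lmerge (linv q) r :: a :: t').getLast (by simp)) = f q := by
        rw [List.getLast_cons (List.cons_ne_nil a t')]
        rwa [List.getLast_cons (List.cons_ne_nil a t')] at hlast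
      have := length_pushList_clash (t := ([] : List L)) (by simp) hlast'
      simp at this ⊢
      omega

lemma conj_transfer {a b g : G}
    (h : ∃ c : G, ∃ k l : ℤ, g⁻¹ * a * g = c ^ k ∧ g⁻¹ * b * g = c ^ l) :
    ∃ c : G, ∃ k l : ℤ, a = c ^ k ∧ b = c ^ l := by
  obtain ⟨c, k, l, h1, h2⟩ := h
  refine ⟨g * c * g⁻¹, k, l, ?_, ?_⟩
  · rw [conj_zpow, ← h1]; group
  · rw [conj_zpow, ← h2]; group

lemma f_eq_false {r : L} (h : f r = false) : r = L.X := by cases r <;> simp_all [f]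

lemma emb_pow_of_f_true {r : L} (h : f r = true) : ∃ k : ℤ, emb r = emb L.Y ^ k := by
  cases r with
  | X => simp [f] at h
  | Y => exact ⟨1, (zpow_one _).symm⟩
  | Z => exact ⟨2, by rw [show (2:ℤ) = 1 + 1 from rfl, zpow_add, zpow_one, embYY]⟩

lemma red_append' {u v : List L} (hu : Red u) (hv : Red v) (hun : u ≠ []) (hvn : v ≠ [])
    (h : f (u.getLast hun) ≠ f (v.head hvn)) : Red (u ++ v) := by
  apply red_append hu hv
  intro x hx y hy
  rw [List.getLast?_eq_getLast hun, Option.mem_some_iff] at hx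
  rw [List.head?_eq_head hvn, Option.mem_some_iff] at hy
  subst hx; subst hy
  exact h

lemma main_aux : ∀ (n : ℕ) (a b : G), (NF a).length + (NF b).length ≤ n → a * b = b * a →
    ∃ (c : G) (k l : ℤ), a = c ^ k ∧ b = c ^ l := by
  intro n
  induction n using Nat.strong_induction_on with
  | _ n ih =>
  intro a b hlen hcomm
  rcases hu : NF a with _ | ⟨p, u⟩
  · exact ⟨b, 0, 1, by rw [eq_one_of_NF_nil hu, zpow_zero], (zpow_one b).symm⟩
  rcases hv : NF b with _ | ⟨q, v⟩
  · exact ⟨a, 1, 0, (zpow_one a).symm, by rw [eq_one_of_NF_nil hv, zpow_zero]⟩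
  have hredu : Red (p :: u) := hu ▸ red_NF a
  have hredv : Red (q :: v) := hv ▸ red_NF b
  have hNFab : NF (a * b) = pushList (p :: u) (q :: v) := by rw [NF_mul, hu, hv]
  have hNFba : NF (b * a) = pushList (q :: v) (p :: u) := by rw [NF_mul, hu, hv]
  have hEq : pushList (p :: u) (q :: v) = pushList (q :: v) (p :: u) := by
    rw [← hNFab, ← hNFba, hcomm]
  set lu := (p :: u).getLast (List.cons_ne_nil p u) with hlu
  set lv := (q :: v).getLast (List.cons_ne_nil q v) with hlv
  have hlen' : (p :: u).length + (q :: v).length ≤ n := by rw [← hu, ← hv]; exact hlen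
  by_cases hR : f lu = f q
  · by_cases hL : f lv = f p
    · -- C3 : both seams clash
      by_cases hVV : f q = f lv
      · -- C3b : conjugation case
        rcases ht : v with _ | ⟨v1, v'⟩
        · -- v = [] : b is a single letter
          subst ht
          have hlvq : lv = q := rfl
          have hqp : f q = f p := by rw [← hlvq]; exact hL
          rcases htu : u with _ | ⟨u1, u'⟩
          · -- both single letters
            subst htu
            have haa : a = emb p := by rw [← tg_NF a, hu, tg_single]
            have hbb : b = emb q := by rw [← tg_NF b, hv, tg_single]
            cases hfq : f q with
            | false =>
              have hpX : p = L.X := f_eq_false (by rw [← hqp]; exact hfq)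
              have hqX : q = L.X := f_eq_false hfq
              exact ⟨emb L.X, 1, 1, by rw [haa, hpX, zpow_one],
                by rw [hbb, hqX, zpow_one]⟩
            | true =>
              obtain ⟨k, hk⟩ := emb_pow_of_f_true (show f p = true by rw [← hqp]; exact hfq)
              obtain ⟨l, hl⟩ := emb_pow_of_f_true hfq
              exact ⟨emb L.Y, k, l, by rw [haa, hk], by rw [hbb, hl]⟩
          · -- v = [], u nonempty tail : conjugate by emb p
            apply conj_transfer (g := emb p)
            have hluq : f lu = f p := hR.trans hqp
            have hA := conj_len (q := p) hu rfl hluq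
            have hB := conj_len (q := p) hv hqp hL
            have hA2 := (hA.2 rfl (by rw [htu]; exact List.cons_ne_nil u1 u'))
            set a' := (emb p)⁻¹ * a * emb p with ha'
            set b' := (emb p)⁻¹ * b * emb p with hb'
            have hcomm' : a' * b' = b' * a' := by
              have e1 : a' * b' = (emb p)⁻¹ * (a * b) * emb p := by rw [ha', hb']; group
              have e2 : b' * a' = (emb p)⁻¹ * (b * a) * emb p := by rw [ha', hb']; group
              rw [e1, e2, hcomm]
            refine ih ((NF a').length + (NF b').length) ?_ a' b' le_rfl hcomm'
            have h1 := hB.1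
            simp only [List.length_cons, List.length_nil] at hA2 h1 hlen' ⊢
            omega
        · -- v nonempty tail : conjugate by emb q
          apply conj_transfer (g := emb q)
          have hpq : f p = f q := (hVV.trans hL).symm
          have hA := conj_len (q := q) hu hpq hR
          have hB := conj_len (q := q) hv rfl hVV.symm
          have hB2 := hB.2 rfl (by rw [ht]; exact List.cons_ne_nil v1 v')
          set a' := (emb q)⁻¹ * a * emb q with ha'
          set b' := (emb q)⁻¹ * b * emb q with hb'
          have hcomm' : a' * b' = b' * a' := by
            have e1 : a' * b' = (emb q)⁻¹ * (a * b) * emb q := by rw [ha', hb']; group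
            have e2 : b' * a' = (emb q)⁻¹ * (b * a) * emb q := by rw [ha', hb']; group
            rw [e1, e2, hcomm]
          refine ih ((NF a').length + (NF b').length) ?_ a' b' le_rfl hcomm'
          have h1 := hA.1
          simp only [List.length_cons] at hB2 h1 hlen' ⊢
          omega
      · -- C3a : absorption via L1
        rcases L1 p u (q :: v) hredu hredv with ⟨x, s, hxs, hfx⟩ | habs1
        · rcases L1 q v (p :: u) hredv hredu with ⟨y, s2, hys, hfy⟩ | habs2
          · exfalso
            rw [hxs, hys] at hEq
            have hxy : x = y := by injection hEq
            apply hVV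
            rw [← hfy, ← hxy, hfx]
            exact hL.symm
          · -- p :: u = winv (q :: v) ++ pushList (q :: v) (p :: u)
            have h3 := congrArg List.length habs2
            rw [List.length_append, length_winv] at h3
            have hlr : (NF (b * a)).length = (pushList (q :: v) (p :: u)).length := by
              rw [hNFba]
            have hcomm0 : b * (b * a) = (b * a) * b := by rw [mul_assoc, hcomm]
            obtain ⟨c, k, l, hB, hA0⟩ :=
              ih ((NF b).length + (NF (b * a)).length) (by
                rw [hv, hlr]
                simp only [List.length_cons] at h3 hlen' ⊢
                omega) b (b * a) le_rfl hcomm0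
            exact ⟨c, -k + l, k, by rw [zpow_add, zpow_neg, ← hB, ← hA0]; group, hB⟩
        · -- q :: v = winv (p :: u) ++ pushList (p :: u) (q :: v)
          have h3 := congrArg List.length habs1
          rw [List.length_append, length_winv] at h3
          have hlr : (NF (a * b)).length = (pushList (p :: u) (q :: v)).length := by
            rw [hNFab]
          have hcomm0 : a * (a * b) = (a * b) * a := by rw [mul_assoc, hcomm]
          obtain ⟨c, k, l, hA, hB0⟩ :=
            ih ((NF a).length + (NF (a * b)).length) (by
              rw [hu, hlr]
              simp only [List.length_cons] at h3 hlen' ⊢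
              omega) a (a * b) le_rfl hcomm0
          exact ⟨c, k, -k + l, hA, by rw [zpow_add, zpow_neg, ← hA, ← hB0]; group⟩
    · -- C2 : right clash only, contradiction
      exfalso
      have h1 : pushList (q :: v) (p :: u) = (q :: v) ++ (p :: u) :=
        pushList_of_red_append
          (red_append' hredv hredu (List.cons_ne_nil q v) (List.cons_ne_nil p u) hL)
      have h2 := length_pushList_clash (t := v) (List.cons_ne_nil p u) hR
      rw [hEq, h1] at h2
      simp only [List.length_append, List.length_cons] at h2
      omega
  · by_cases hL : f lv = f p
    · -- C2 mirror : left clash only, contradiction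
      exfalso
      have h1 : pushList (p :: u) (q :: v) = (p :: u) ++ (q :: v) :=
        pushList_of_red_append
          (red_append' hredu hredv (List.cons_ne_nil p u) (List.cons_ne_nil q v) hR)
      have h2 := length_pushList_clash (t := u) (List.cons_ne_nil q v) hL
      rw [← hEq, h1] at h2
      simp only [List.length_append, List.length_cons] at h2
      omega
    · -- C1 : both seams clean
      have h1 : pushList (p :: u) (q :: v) = (p :: u) ++ (q :: v) :=
        pushList_of_red_append
          (red_append' hredu hredv (List.cons_ne_nil p u) (List.cons_ne_nil q v) hR)
      have h2 : pushList (q :: v) (p :: u) = (q :: v) ++ (p :: u) :=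
        pushList_of_red_append
          (red_append' hredv hredu (List.cons_ne_nil q v) (List.cons_ne_nil p u) hL)
      have hc : (p :: u) ++ (q :: v) = (q :: v) ++ (p :: u) := by
        rw [← h1, ← h2, hEq]
      obtain ⟨r, pp, qq, hsr, htr⟩ :=
        comm_lists ((p :: u).length + (q :: v).length) (p :: u) (q :: v) le_rfl hc
      refine ⟨tg r, pp, qq, ?_, ?_⟩
      · rw [zpow_natCast, ← tg_nrep, ← hsr, ← hu, tg_NF]
      · rw [zpow_natCast, ← tg_nrep, ← htr, ← hv, tg_NF]

end C2C3Aux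


/-- If `a, b ∈ ℤ/2ℤ ∗ ℤ/3ℤ` commute, then `a = c^k` and `b = c^l` for some element
`c` and integers `k, l`. -/
theorem commuting_elements_free_product (a b : FreeProdC2C3) (h : a * b = b * a) :
    ∃ (c : FreeProdC2C3) (k l : ℤ), a = c ^ k ∧ b = c ^ l :=
  C2C3Aux.main_aux ((C2C3Aux.NF a).length + (C2C3Aux.NF b).length) a b le_rfl h
end
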